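/- Let R be a ring with unity such that the group of units U(R) contains an ω-subgroup. Then the set of nilpotent elements of the FC-subring ∇(R) forms a two-sided ideal of ∇(R): it is closed under addition, and closed under left and right multiplication by elements of ∇(R). -/

import Mathlib

/-- The centralizer of a ring element `a` inside the unit group `Rˣ`. -/
def unitCentralizer {R : Type*} [Ring R] (a : R) : Subgroup Rˣ where
  carrier := {u : Rˣ | (u : R) * a = a * (u : R)}
  one_mem' := by simp
  mul_mem' := by
    intro u v hu hv
    have hu' : Commute ((u : Rˣ) : R) a := hu
    have hv' : Commute ((v : Rˣ) : R) a := hv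
    show ((u * v : Rˣ) : R) * a = a * ((u * v : Rˣ) : R)
    rw [Units.val_mul]
    exact hu'.mul_left hv'
  inv_mem' := by
    intro u hu
    have hu' : Commute ((u : Rˣ) : R) a := hu
    exact hu'.units_inv_left

@[simp] lemma mem_unitCentralizer {R : Type*} [Ring R] {a : R} {u : Rˣ} :
    u ∈ unitCentralizer a ↔ (u : R) * a = a * (u : R) := Iff.rfl

/-- The FC-subring `∇(R)` of a ring `R`: the set of elements whose centralizer
in the unit group has finite index. -/
def FCSubring (R : Type*) [Ring R] : Set R :=
  {a : R | (unitCentralizer a).FiniteIndex}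

/-- An infinite subgroup `H ≤ Rˣ` is an ω-subgroup if for every nonzero Lie
commutator `x*y - y*x` only finitely many elements of the form `1 - h`, `h ∈ H`,
annihilate it on the left. -/
def IsOmegaSubgroup {R : Type*} [Ring R] (H : Subgroup Rˣ) : Prop :=
  (H : Set Rˣ).Infinite ∧
    ∀ x y : R, x * y - y * x ≠ 0 →
      {h : Rˣ | h ∈ H ∧ (1 - (h : R)) * (x * y - y * x) = 0}.Finite

/-- The FC-radical `ΔU(R)` of the unit group: the subgroup of units having only
finitely many conjugates, i.e. whose centralizer has finite index. -/
def FCRadical (R : Type*) [Ring R] : Subgroup Rˣ where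
  carrier := {u : Rˣ | (unitCentralizer (u : R)).FiniteIndex}
  one_mem' := by
    have h : unitCentralizer ((1 : Rˣ) : R) = ⊤ := by
      ext u; simp
    show (unitCentralizer ((1 : Rˣ) : R)).FiniteIndex
    rw [h]
    infer_instance
  mul_mem' := by
    intro u v hu hv
    have hle : unitCentralizer (u : R) ⊓ unitCentralizer (v : R) ≤
        unitCentralizer ((u * v : Rˣ) : R) := by
      intro w hw
      have hwu : (w : R) * (u : R) = (u : R) * (w : R) := hw.1
      have hwv : (w : R) * (v : R) = (v : R) * (w : R) := hw.2
      show (w : R) * ((u * v : Rˣ) : R) = ((u * v : Rˣ) : R) * (w : R)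
      rw [Units.val_mul, ← mul_assoc, hwu, mul_assoc, hwv, ← mul_assoc]
    haveI : (unitCentralizer (u : R)).FiniteIndex := hu
    haveI : (unitCentralizer (v : R)).FiniteIndex := hv
    exact Subgroup.finiteIndex_of_le hle
  inv_mem' := by
    intro u hu
    have h : unitCentralizer ((u⁻¹ : Rˣ) : R) = unitCentralizer (u : R) := by
      ext w
      constructor
      · intro hw
        have hw' : Commute ((w : Rˣ) : R) ((u⁻¹ : Rˣ) : R) := hw
        have h2 : Commute ((w : Rˣ) : R) ((u⁻¹⁻¹ : Rˣ) : R) := hw'.units_inv_right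
        rw [inv_inv] at h2
        exact h2
      · intro hw
        have hw' : Commute ((w : Rˣ) : R) ((u : Rˣ) : R) := hw
        exact hw'.units_inv_right
    show (unitCentralizer ((u⁻¹ : Rˣ) : R)).FiniteIndex
    rw [h]
    exact hu

@[simp] lemma mem_FCRadical {R : Type*} [Ring R] {u : Rˣ} :
    u ∈ FCRadical R ↔ (unitCentralizer (u : R)).FiniteIndex := Iff.rfl
section OmegaInfra

variable {R : Type*} [Ring R]

lemma FC_one' : (1 : R) ∈ FCSubring R := by
  show (unitCentralizer (1:R)).FiniteIndex
  have h : unitCentralizer (1 : R) = ⊤ := by ext u; simp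
  rw [h]; infer_instance

lemma FC_mul' {a b : R} (ha : a ∈ FCSubring R) (hb : b ∈ FCSubring R) :
    a * b ∈ FCSubring R := by
  haveI : (unitCentralizer a).FiniteIndex := ha
  haveI : (unitCentralizer b).FiniteIndex := hb
  have hle : unitCentralizer a ⊓ unitCentralizer b ≤ unitCentralizer (a * b) := by
    intro w hw
    have h1 : (w : R) * a = a * w := hw.1
    have h2 : (w : R) * b = b * w := hw.2
    show (w : R) * (a * b) = (a * b) * w
    rw [← mul_assoc, h1, mul_assoc, h2, ← mul_assoc]
  exact Subgroup.finiteIndex_of_le hle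

lemma FC_add' {a b : R} (ha : a ∈ FCSubring R) (hb : b ∈ FCSubring R) :
    a + b ∈ FCSubring R := by
  haveI : (unitCentralizer a).FiniteIndex := ha
  haveI : (unitCentralizer b).FiniteIndex := hb
  have hle : unitCentralizer a ⊓ unitCentralizer b ≤ unitCentralizer (a + b) := by
    intro w hw
    have h1 : (w : R) * a = a * w := hw.1
    have h2 : (w : R) * b = b * w := hw.2
    show (w : R) * (a + b) = (a + b) * w
    rw [mul_add, add_mul, h1, h2]
  exact Subgroup.finiteIndex_of_le hle

lemma FC_pow' {a : R} (ha : a ∈ FCSubring R) (n : ℕ) : a ^ n ∈ FCSubring R := by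
  induction n with
  | zero => simpa using FC_one'
  | succ k ih => rw [pow_succ]; exact FC_mul' ih ha

/-- pigeonhole: an infinite set with finitely many values has an infinite fiber -/
lemma exists_infinite_fiber' {α β : Type*} {s : Set α} (hs : s.Infinite) (f : α → β)
    (hf : (f '' s).Finite) : ∃ v, {a | a ∈ s ∧ f a = v}.Infinite := by
  by_contra h
  push_neg at h
  have hsub : s ⊆ ⋃ v ∈ f '' s, {a | a ∈ s ∧ f a = v} := by
    intro a ha
    exact Set.mem_biUnion ⟨a, ha, rfl⟩ ⟨ha, rfl⟩
  exact hs ((hf.biUnion (fun v _ => h v)).subset hsub)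

/-- the conjugacy orbit of an FC element is finite -/
lemma conjOrbit_finite {b : R} (hb : b ∈ FCSubring R) :
    {r : R | ∃ u : Rˣ, r = (u : R) * b * (↑u⁻¹ : Rˣ)}.Finite := by
  haveI : (unitCentralizer b).FiniteIndex := hb
  haveI : Finite (Rˣ ⧸ unitCentralizer b) := by
    apply Nat.finite_of_card_ne_zero
    exact Subgroup.FiniteIndex.index_ne_zero
  have wd : ∀ u v : Rˣ, (QuotientGroup.leftRel (unitCentralizer b)) u v →
      (u : R) * b * (↑u⁻¹ : Rˣ) = (v : R) * b * (↑v⁻¹ : Rˣ) := by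
    intro u v huv
    rw [QuotientGroup.leftRel_apply] at huv
    obtain ⟨c, hcmem, hv⟩ : ∃ c : Rˣ, c ∈ unitCentralizer b ∧ v = u * c :=
      ⟨u⁻¹ * v, huv, by group⟩
    have hc : (c : R) * b = b * (c : R) := hcmem
    have hcc : (c : R) * b * ((↑c⁻¹ : Rˣ) : R) = b := by
      rw [hc, mul_assoc, ← Units.val_mul, mul_inv_cancel, Units.val_one, mul_one]
    have expand : ((↑(u * c) : Rˣ) : R) * b * ((↑(u * c)⁻¹ : Rˣ) : R)
        = (u : R) * b * ((↑u⁻¹ : Rˣ) : R) := by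
      rw [mul_inv_rev, Units.val_mul, Units.val_mul]
      have hassoc : ((u : R) * (c : R)) * b * (((↑c⁻¹ : Rˣ) : R) * ((↑u⁻¹ : Rˣ) : R))
          = (u : R) * ((c : R) * b * ((↑c⁻¹ : Rˣ) : R)) * ((↑u⁻¹ : Rˣ) : R) := by
        noncomm_ring
      rw [hassoc, hcc]
    rw [hv]
    exact expand.symm
  let F : Rˣ ⧸ unitCentralizer b → R := Quotient.lift (fun u : Rˣ => (u : R) * b * (↑u⁻¹ : Rˣ)) wd
  have hsub : {r : R | ∃ u : Rˣ, r = (u : R) * b * (↑u⁻¹ : Rˣ)} ⊆ Set.range F := by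
    rintro r ⟨u, rfl⟩
    exact ⟨QuotientGroup.mk u, rfl⟩
  exact (Set.finite_range F).subset hsub

/-- an infinite subgroup meets the centralizers of two FC elements in an infinite set -/
lemma infinite_commuting_set (H : Subgroup Rˣ) (hH : (H : Set Rˣ).Infinite)
    {z w : R} (hz : z ∈ FCSubring R) (hw : w ∈ FCSubring R) :
    {g : Rˣ | g ∈ H ∧ (g : R) * z = z * g ∧ (g : R) * w = w * g}.Infinite := by
  haveI : (unitCentralizer z).FiniteIndex := hz
  haveI : (unitCentralizer w).FiniteIndex := hw
  haveI : Finite (Rˣ ⧸ unitCentralizer z) := by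
    apply Nat.finite_of_card_ne_zero; exact Subgroup.FiniteIndex.index_ne_zero
  haveI : Finite (Rˣ ⧸ unitCentralizer w) := by
    apply Nat.finite_of_card_ne_zero; exact Subgroup.FiniteIndex.index_ne_zero
  set f : Rˣ → (Rˣ ⧸ unitCentralizer z) × (Rˣ ⧸ unitCentralizer w) :=
    fun g => (QuotientGroup.mk g, QuotientGroup.mk g) with hf
  obtain ⟨v, hv⟩ := exists_infinite_fiber' hH f (Set.toFinite _)
  obtain ⟨g₀, hg₀⟩ := hv.nonempty
  have hinj : Set.InjOn (fun g : Rˣ => g₀⁻¹ * g) {a | a ∈ (H : Set Rˣ) ∧ f a = v} := by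
    intro a _ b _ hab
    simpa using mul_left_cancel (hab : g₀⁻¹ * a = g₀⁻¹ * b)
  apply Set.Infinite.mono (s := (fun g : Rˣ => g₀⁻¹ * g) '' {a | a ∈ (H : Set Rˣ) ∧ f a = v})
  · rintro r ⟨g, ⟨hgH, hgv⟩, rfl⟩
    have h1 : g₀⁻¹ * g ∈ H := mul_mem (inv_mem hg₀.1) hgH
    have hzz : (QuotientGroup.mk g₀ : Rˣ ⧸ unitCentralizer z) = QuotientGroup.mk g := by
      have := hg₀.2; rw [hf] at this hgv
      have h1 := congrArg Prod.fst this
      have h2 := congrArg Prod.fst hgv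
      simp at h1 h2; rw [h1, h2]
    have hww : (QuotientGroup.mk g₀ : Rˣ ⧸ unitCentralizer w) = QuotientGroup.mk g := by
      have := hg₀.2; rw [hf] at this hgv
      have h1 := congrArg Prod.snd this
      have h2 := congrArg Prod.snd hgv
      simp at h1 h2; rw [h1, h2]
    have hcz : g₀⁻¹ * g ∈ unitCentralizer z := (QuotientGroup.eq).mp hzz
    have hcw : g₀⁻¹ * g ∈ unitCentralizer w := (QuotientGroup.eq).mp hww
    exact ⟨h1, hcz, hcw⟩
  · exact hv.image hinj

end OmegaInfra
section CoreLemma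

variable {R : Type*} [Ring R]

/-- Core lemma: if `z` is nilpotent in `∇(R)`, `b, w ∈ ∇(R)`, and `z*w = w*z = 0`,
then `z*b*w = 0`, provided the unit group contains an ω-subgroup. -/
lemma zbw_eq_zero (H : Subgroup Rˣ) (hH : IsOmegaSubgroup H)
    {z b w : R} (hz : z ∈ FCSubring R) (hb : b ∈ FCSubring R) (hw : w ∈ FCSubring R)
    (hnil : IsNilpotent z) (hzw : z * w = 0) (hwz : w * z = 0) :
    z * (b * w) = 0 := by
  by_contra hd
  -- the commuting infinite set
  have hS : {g : Rˣ | g ∈ H ∧ (g : R) * z = z * g ∧ (g : R) * w = w * g}.Infinite :=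
    infinite_commuting_set H hH.1 hz hw
  set S := {g : Rˣ | g ∈ H ∧ (g : R) * z = z * g ∧ (g : R) * w = w * g} with hSdef
  -- the conjugation map
  set f : Rˣ → R := fun g => (1 + z * g) * b * Ring.inverse (1 + z * g) with hfdef
  -- units
  have hunit : ∀ g ∈ S, IsUnit (1 + z * (g : R)) := by
    intro g hg
    have hcomm : Commute z (g : R) := (hg.2.1).symm
    have hn : IsNilpotent (z * (g : R)) := hcomm.isNilpotent_mul_right hnil
    have := hn.isUnit_add_right_of_commute isUnit_one (Commute.one_right _)
    simpa [add_comm] using this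
  -- f lands in the conjugacy orbit of b
  have hrange : f '' S ⊆ {r : R | ∃ u : Rˣ, r = (u : R) * b * (↑u⁻¹ : Rˣ)} := by
    rintro r ⟨g, hg, rfl⟩
    refine ⟨(hunit g hg).unit, ?_⟩
    rw [hfdef]
    simp only
    rw [IsUnit.unit_spec, ← Ring.inverse_unit (hunit g hg).unit, IsUnit.unit_spec]
  have hfin : (f '' S).Finite := (conjOrbit_finite hb).subset hrange
  obtain ⟨v, hT⟩ := exists_infinite_fiber' hS f hfin
  set T := {g : Rˣ | g ∈ S ∧ f g = v} with hTdef
  obtain ⟨g₀, hg₀⟩ := hT.nonempty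
  -- key identity : for g ∈ T, (g:R) * (z * (b * w)) is constant
  have hkey : ∀ g ∈ T, b * w + (g : R) * (z * (b * w)) = v * w := by
    intro g hg
    obtain ⟨⟨hgH, hgz, hgw⟩, hgv⟩ := hg
    have hu := hunit g ⟨hgH, hgz, hgw⟩
    -- (1 + z*g) * w = w
    have h1 : (1 + z * (g : R)) * w = w := by
      have : z * (g : R) * w = 0 := by
        rw [mul_assoc, hgw, ← mul_assoc, hzw, zero_mul]
      rw [add_mul, one_mul, this, add_zero]
    -- Ring.inverse (1 + z*g) * w = w
    have h2 : Ring.inverse (1 + z * (g : R)) * w = w := by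
      conv_lhs => rw [← h1]
      rw [← mul_assoc, Ring.inverse_mul_cancel _ hu, one_mul]
    have : f g * w = b * w + (g : R) * (z * (b * w)) := by
      rw [hfdef]
      simp only
      rw [mul_assoc, h2, add_mul, one_mul, add_mul]
      congr 1
      rw [mul_assoc (z * (g : R)) b w, ← hgz, mul_assoc]
    rw [← this, hgv]
  -- hence for all g ∈ T : (g₀⁻¹ * g) annihilates 1 - h against d
  have hann : ∀ g ∈ T, ((g₀⁻¹ * g : Rˣ) : R) * (z * (b * w)) = z * (b * w) := by
    intro g hg
    have e1 := hkey g hg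
    have e2 := hkey g₀ hg₀
    have e3 : (g : R) * (z * (b * w)) = (g₀ : R) * (z * (b * w)) := by
      have := e1.trans e2.symm
      exact add_left_cancel this
    rw [Units.val_mul, mul_assoc, e3, ← mul_assoc, ← Units.val_mul, inv_mul_cancel,
      Units.val_one, one_mul]
  -- this gives an infinite subset of the ω-finite set
  have hne : (z * b) * w - w * (z * b) ≠ 0 := by
    rw [← mul_assoc w z, hwz, zero_mul, sub_zero, mul_assoc]
    exact hd
  have hfin2 := hH.2 (z * b) w hne
  have hsub : (fun g : Rˣ => g₀⁻¹ * g) '' T ⊆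
      {h : Rˣ | h ∈ H ∧ (1 - (h : R)) * ((z * b) * w - w * (z * b)) = 0} := by
    rintro r ⟨g, hg, rfl⟩
    constructor
    · exact mul_mem (inv_mem hg₀.1.1) hg.1.1
    · rw [← mul_assoc w z, hwz, zero_mul, sub_zero, sub_mul, one_mul, mul_assoc]
      rw [hann g hg]
      simp
  have hinj : Set.InjOn (fun g : Rˣ => g₀⁻¹ * g) T := by
    intro a _ b' _ hab
    simpa using mul_left_cancel (hab : g₀⁻¹ * a = g₀⁻¹ * b')
  exact (hT.image hinj).mono hsub hfin2

end CoreLemma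
section Words

variable {R : Type*} [Ring R]

/-- auxiliary word product -/
def wprod (x : R) : List (ℕ × R) → R
  | [] => 1
  | (e, c) :: t => x ^ e * (c * wprod x t)

lemma wprod_nil (x : R) : wprod x [] = 1 := rfl

lemma wprod_cons (x : R) (e : ℕ) (c : R) (t : List (ℕ × R)) :
    wprod x ((e, c) :: t) = x ^ e * (c * wprod x t) := rfl

lemma wprod_mem {x : R} (hx : x ∈ FCSubring R) :
    ∀ (L : List (ℕ × R)), (∀ p ∈ L, p.2 ∈ FCSubring R) → wprod x L ∈ FCSubring R := by
  intro L
  induction L with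
  | nil => intro _; simpa [wprod_nil] using FC_one'
  | cons p t ih =>
    intro hmem
    obtain ⟨e, c⟩ := p
    rw [wprod_cons]
    exact FC_mul' (FC_pow' hx e) (FC_mul' (hmem (e, c) (List.mem_cons_self))
      (ih (fun q hq => hmem q (List.mem_cons_of_mem _ hq))))

lemma pow_eq_zero_of_le' {x : R} {m n : ℕ} (h : m ≤ n) (hm : x ^ m = 0) : x ^ n = 0 := by
  have hn : x ^ n = x ^ m * x ^ (n - m) := by rw [← pow_add]; congr 1; omega
  rw [hn, hm, zero_mul]

/-- The main vanishing lemma. -/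
lemma vanish (H : Subgroup Rˣ) (hH : IsOmegaSubgroup H)
    {x : R} (hx : x ∈ FCSubring R) {m : ℕ} (hm : x ^ m = 0) :
    ∀ (k : ℕ) (L : List (ℕ × R)), L.length = k →
      (∀ p ∈ L, 1 ≤ p.1 ∧ p.2 ∈ FCSubring R) →
      ∀ e : ℕ, m ≤ (L.map Prod.fst).sum + e → wprod x L * x ^ e = 0 := by
  intro k
  induction k with
  | zero =>
    intro L hL _ e he
    rw [List.length_eq_zero_iff] at hL
    subst hL
    simp only [wprod_nil, one_mul]
    simp only [List.map_nil, List.sum_nil, zero_add] at he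
    exact pow_eq_zero_of_le' he hm
  | succ n ih =>
    intro L hL hmem e he
    match L with
    | (f, c) :: t =>
      have hlen : t.length = n := by simpa using hL
      have hf1 : 1 ≤ f := (hmem (f, c) (List.mem_cons_self)).1
      have hcFC : c ∈ FCSubring R := (hmem (f, c) (List.mem_cons_self)).2
      have htmem : ∀ p ∈ t, 1 ≤ p.1 ∧ p.2 ∈ FCSubring R :=
        fun p hp => hmem p (List.mem_cons_of_mem _ hp)
      have hsum : m ≤ f + ((t.map Prod.fst).sum + e) := by
        simp only [List.map_cons, List.sum_cons] at he
        omega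
      set w : R := wprod x t * x ^ e with hwdef
      have hwFC : w ∈ FCSubring R :=
        FC_mul' (wprod_mem hx t (fun p hp => (htmem p hp).2)) (FC_pow' hx e)
      have hzFC : x ^ f ∈ FCSubring R := FC_pow' hx f
      have hznil : IsNilpotent (x ^ f) := by
        refine ⟨m, ?_⟩
        rw [← pow_mul]
        exact pow_eq_zero_of_le' (Nat.le_mul_of_pos_left m hf1) hm
      have hzw : x ^ f * w = 0 := by
        rw [hwdef]
        match t, hlen, htmem, hsum with
        | [], hlen, htmem, hsum =>
          rw [wprod_nil, one_mul, ← pow_add]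
          refine pow_eq_zero_of_le' ?_ hm
          simp only [List.map_nil, List.sum_nil, zero_add] at hsum
          omega
        | (f₁, c₁) :: t', hlen, htmem, hsum =>
          have key : x ^ f * (wprod x ((f₁, c₁) :: t') * x ^ e)
              = wprod x ((f + f₁, c₁) :: t') * x ^ e := by
            rw [wprod_cons, wprod_cons, pow_add]
            simp only [mul_assoc]
          rw [key]
          refine ih ((f + f₁, c₁) :: t') (by simpa using hlen) ?_ e ?_
          · intro p hp
            rcases List.mem_cons.mp hp with h | h
            · subst h
              refine ⟨by omega, (htmem (f₁, c₁) (List.mem_cons_self)).2⟩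
            · exact htmem p (List.mem_cons_of_mem _ h)
          · simp only [List.map_cons, List.sum_cons] at hsum ⊢
            omega
      have hwz : w * x ^ f = 0 := by
        rw [hwdef, mul_assoc, ← pow_add]
        refine ih t hlen htmem (e + f) ?_
        omega
      have hmain : x ^ f * (c * w) = 0 :=
        zbw_eq_zero H hH hzFC hcFC hwFC hznil hzw hwz
      rw [wprod_cons]
      rw [hwdef] at hmain
      calc x ^ f * (c * wprod x t) * x ^ e = x ^ f * (c * (wprod x t * x ^ e)) := by
            simp only [mul_assoc]
        _ = 0 := hmain

end Words
section Assemble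

variable {R : Type*} [Ring R]

/-- `gg x [c₁,…,cₖ] = x c₁ x c₂ ⋯ cₖ x` (k+1 copies of x) -/
def gg (x : R) (cs : List R) : R := wprod x (cs.map fun c => (1, c)) * x

lemma gg_nil (x : R) : gg x [] = x := by simp [gg, wprod_nil]

lemma gg_cons (x : R) (c : R) (cs : List R) : gg x (c :: cs) = x * (c * gg x cs) := by
  simp only [gg, List.map_cons, wprod_cons, pow_one]
  simp only [mul_assoc]

lemma sum_ones (cs : List R) : (((cs.map fun c => ((1 : ℕ), c))).map Prod.fst).sum = cs.length := by
  induction cs with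
  | nil => simp
  | cons c t ih =>
    simp only [List.map_cons, List.sum_cons, List.length_cons, ih]
    omega

lemma gg_zero (H : Subgroup Rˣ) (hH : IsOmegaSubgroup H)
    {x : R} (hx : x ∈ FCSubring R) {m : ℕ} (hm : x ^ m = 0)
    (cs : List R) (hcs : ∀ c ∈ cs, c ∈ FCSubring R) (hlen : m ≤ cs.length + 1) :
    gg x cs = 0 := by
  have := vanish H hH hx hm cs.length (cs.map fun c => (1, c)) (by simp) ?_ 1 ?_
  · simpa [gg] using this
  · intro p hp
    obtain ⟨c, hc, rfl⟩ := List.mem_map.mp hp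
    exact ⟨le_refl 1, hcs c hc⟩
  · rw [sum_ones]; omega

lemma exists_pow_pos {x : R} (hx : IsNilpotent x) : ∃ m, 1 ≤ m ∧ x ^ m = 0 := by
  obtain ⟨n, hn⟩ := hx
  match n, hn with
  | 0, hn =>
    refine ⟨1, le_refl 1, ?_⟩
    rw [pow_zero] at hn
    rw [pow_one, ← mul_one x, hn, mul_zero]
  | (k+1), hn => exact ⟨k+1, by omega, hn⟩

lemma pow_xa (x a : R) : ∀ k : ℕ, (x * a) ^ (k + 1) = gg x (List.replicate k a) * a := by
  intro k
  induction k with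
  | zero => simp [gg_nil]
  | succ k ih =>
    rw [pow_succ', ih, List.replicate_succ, gg_cons]
    simp only [mul_assoc]

lemma shift_pow (a x : R) : ∀ k : ℕ, a * (x * a) ^ k = (a * x) ^ k * a := by
  intro k
  induction k with
  | zero => simp
  | succ k ih =>
    rw [pow_succ, pow_succ, ← mul_assoc, ih]
    simp only [mul_assoc]

/-- nilpotency of products -/
lemma nilpotent_xa (H : Subgroup Rˣ) (hH : IsOmegaSubgroup H)
    {x a : R} (hx : x ∈ FCSubring R) (ha : a ∈ FCSubring R) (hnx : IsNilpotent x) :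
    IsNilpotent (x * a) := by
  obtain ⟨m, hm1, hm⟩ := exists_pow_pos hnx
  refine ⟨m, ?_⟩
  have hrep : ∀ c ∈ List.replicate (m - 1) a, c ∈ FCSubring R := by
    intro c hc
    rw [List.eq_of_mem_replicate hc]; exact ha
  have hgg : gg x (List.replicate (m - 1) a) = 0 :=
    gg_zero H hH hx hm _ hrep (by simp; omega)
  have := pow_xa x a (m - 1)
  rw [hgg, zero_mul] at this
  have hmm : m - 1 + 1 = m := by omega
  rwa [hmm] at this

lemma nilpotent_ax (H : Subgroup Rˣ) (hH : IsOmegaSubgroup H)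
    {x a : R} (hx : x ∈ FCSubring R) (ha : a ∈ FCSubring R) (hnx : IsNilpotent x) :
    IsNilpotent (a * x) := by
  obtain ⟨m, hxa⟩ := nilpotent_xa H hH hx ha hnx
  refine ⟨m + 1, ?_⟩
  rw [pow_succ, ← mul_assoc, ← shift_pow, hxa, mul_zero, zero_mul]

/-! boolean words -/

def bword (x y : R) : List Bool → R
  | [] => 1
  | b :: t => (bif b then x else y) * bword x y t

lemma bword_nil (x y : R) : bword x y [] = 1 := rfl

lemma bword_cons (x y : R) (b : Bool) (t : List Bool) :
    bword x y (b :: t) = (bif b then x else y) * bword x y t := rfl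

lemma bword_append (x y : R) (l₁ l₂ : List Bool) :
    bword x y (l₁ ++ l₂) = bword x y l₁ * bword x y l₂ := by
  induction l₁ with
  | nil => simp [bword_nil]
  | cons b t ih => simp [bword_cons, ih, mul_assoc]

lemma bword_swap (x y : R) (l : List Bool) : bword x y l = bword y x (l.map not) := by
  induction l with
  | nil => simp [bword_nil]
  | cons b t ih =>
    cases b <;> simp [bword_cons, ih]

lemma count_true_map_not (l : List Bool) : (l.map not).count true = l.count false := by
  induction l with
  | nil => simp
  | cons b t ih =>
    cases b <;> simp [List.count_cons, ih]

lemma count_true_add_false (l : List Bool) : l.count true + l.count false = l.length := by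
  induction l with
  | nil => simp
  | cons b t ih =>
    cases b <;> simp [List.count_cons, ih] <;> omega

/-- extraction: a word with at least j+1 x-letters factors through `gg` -/
lemma extract (x y : R) (hy : y ∈ FCSubring R) :
    ∀ (l : List Bool) (j : ℕ), j + 1 ≤ l.count true →
    ∃ (p : R) (cs : List R) (q : R), p ∈ FCSubring R ∧ (∀ c ∈ cs, c ∈ FCSubring R) ∧
      cs.length = j ∧ bword x y l = p * (gg x cs * q) := by
  intro l
  induction l with
  | nil => intro j hj; simp at hj
  | cons b t ih =>
    intro j hj
    cases b with
    | false =>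
      have hj' : j + 1 ≤ t.count true := by
        simpa [List.count_cons] using hj
      obtain ⟨p, cs, q, hp, hcs, hlen, heq⟩ := ih j hj'
      refine ⟨y * p, cs, q, FC_mul' hy hp, hcs, hlen, ?_⟩
      rw [bword_cons, heq]
      simp only [cond_false, mul_assoc]
    | true =>
      match j, hj with
      | 0, hj =>
        refine ⟨1, [], bword x y t, FC_one', by simp, rfl, ?_⟩
        rw [bword_cons, gg_nil]
        simp only [cond_true, one_mul]
      | (j'+1), hj =>
        have hj' : j' + 1 ≤ t.count true := by
          simp [List.count_cons] at hj; omega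
        obtain ⟨p, cs, q, hp, hcs, hlen, heq⟩ := ih j' hj'
        refine ⟨1, p :: cs, q, FC_one', ?_, by simp [hlen], ?_⟩
        · intro c hc
          rcases List.mem_cons.mp hc with h | h
          · subst h; exact hp
          · exact hcs c h
        · rw [bword_cons, heq, gg_cons]
          simp only [cond_true, one_mul, mul_assoc]

lemma bword_zero (H : Subgroup Rˣ) (hH : IsOmegaSubgroup H)
    {x y : R} (hx : x ∈ FCSubring R) (hy : y ∈ FCSubring R)
    {m : ℕ} (hm1 : 1 ≤ m) (hm : x ^ m = 0)
    (l : List Bool) (hcount : m ≤ l.count true) : bword x y l = 0 := by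
  obtain ⟨p, cs, q, hp, hcs, hlen, heq⟩ := extract x y hy l (m - 1) (by omega)
  have hgg : gg x cs = 0 := gg_zero H hH hx hm cs hcs (by omega)
  rw [heq, hgg, zero_mul, mul_zero]

/-- expansion of (x+y)^L into boolean words -/
lemma pow_add_mem_closure (x y : R) :
    ∀ L : ℕ, (x + y) ^ L ∈
      AddSubmonoid.closure {r : R | ∃ l : List Bool, l.length = L ∧ bword x y l = r} := by
  intro L
  induction L with
  | zero =>
    rw [pow_zero]
    exact AddSubmonoid.subset_closure ⟨[], rfl, rfl⟩
  | succ n ih =>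
    rw [pow_succ]
    refine AddSubmonoid.closure_induction ?_ ?_ (fun r s _ _ hr hs => ?_) ih
    · rintro r ⟨l, hlen, rfl⟩
      have h1 : bword x y l * (x + y) = bword x y (l ++ [true]) + bword x y (l ++ [false]) := by
        rw [bword_append, bword_append]
        simp [bword_cons, bword_nil, mul_add]
      rw [h1]
      exact add_mem (AddSubmonoid.subset_closure ⟨l ++ [true], by simp [hlen], rfl⟩)
        (AddSubmonoid.subset_closure ⟨l ++ [false], by simp [hlen], rfl⟩)
    · rw [zero_mul]; exact zero_mem _
    · rw [add_mul]; exact add_mem hr hs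

lemma nilpotent_sum (H : Subgroup Rˣ) (hH : IsOmegaSubgroup H)
    {x y : R} (hx : x ∈ FCSubring R) (hy : y ∈ FCSubring R)
    (hnx : IsNilpotent x) (hny : IsNilpotent y) : IsNilpotent (x + y) := by
  obtain ⟨m, hm1, hm⟩ := exists_pow_pos hnx
  obtain ⟨n, hn1, hn⟩ := exists_pow_pos hny
  refine ⟨m + n - 1, ?_⟩
  have hmem := pow_add_mem_closure x y (m + n - 1)
  refine AddSubmonoid.closure_induction ?_ rfl (fun r s _ _ hr hs => by rw [hr, hs, add_zero]) hmem
  · rintro r ⟨l, hlen, rfl⟩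
    have hcount := count_true_add_false l
    rcases le_or_gt m (l.count true) with h | h
    · exact bword_zero H hH hx hy hm1 hm l h
    · have hc : n ≤ l.count false := by omega
      rw [bword_swap]
      exact bword_zero H hH hy hx hn1 hn (l.map not) (by rwa [count_true_map_not])

end Assemble

theorem nilpotents_form_ideal (R : Type*) [Ring R]
    (H : Subgroup Rˣ) (hH : IsOmegaSubgroup H) :
    (∀ x ∈ FCSubring R, ∀ y ∈ FCSubring R, IsNilpotent x → IsNilpotent y →
      x + y ∈ FCSubring R ∧ IsNilpotent (x + y)) ∧
    (∀ a ∈ FCSubring R, ∀ x ∈ FCSubring R, IsNilpotent x →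
      (a * x ∈ FCSubring R ∧ IsNilpotent (a * x)) ∧
      (x * a ∈ FCSubring R ∧ IsNilpotent (x * a))) := by
  constructor
  · intro x hx y hy hnx hny
    exact ⟨FC_add' hx hy, nilpotent_sum H hH hx hy hnx hny⟩
  · intro a ha x hx hnx
    exact ⟨⟨FC_mul' ha hx, nilpotent_ax H hH hx ha hnx⟩,
      ⟨FC_mul' hx ha, nilpotent_xa H hH hx ha hnx⟩⟩
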